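/- Let k : ℝ^d → ℝ be a measurable function with 0 ≤ k(w) ≤ M for all w ∈ ℝ^d, and let g be its Gaussian smoothing with parameter σ > 0. Then g is twice differentiable on ℝ^d and its Hessian admits the log-derivative (score-function) representation ∇²g(μ) = ∫_{ℝ^d} (2π)^{−d/2} exp(−‖w‖²/2) · σ^{−2}(wwᵀ − I) · k(μ + σw) dw. -/

import Mathlib

open MeasureTheory Real
open scoped RealInnerProductSpace

/-- The Gaussian smoothing of `k : ℝ^d → ℝ` with parameter `σ`:
`g(μ) = ∫ (2πσ²)^(−d/2) · exp(−‖w − μ‖²/(2σ²)) · k(w) dw = E_{w ∼ N(μ, σ²I)}[k(w)]`. -/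
noncomputable def gaussSmooth (d : ℕ) (σ : ℝ) (k : EuclideanSpace ℝ (Fin d) → ℝ) :
    EuclideanSpace ℝ (Fin d) → ℝ :=
  fun μ => ∫ w, (2 * π * σ ^ 2) ^ (-(d : ℝ) / 2) * Real.exp (-‖w - μ‖ ^ 2 / (2 * σ ^ 2)) * k w

set_option maxHeartbeats 2000000
set_option synthInstance.maxHeartbeats 400000

section Aux

variable {d : ℕ}

local notation "E" => EuclideanSpace ℝ (Fin d)

noncomputable def innerB (d : ℕ) :
    EuclideanSpace ℝ (Fin d) →L[ℝ] EuclideanSpace ℝ (Fin d) →L[ℝ] ℝ := innerSL ℝ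

@[simp] lemma innerB_apply (u v : E) : innerB d u v = ⟪u, v⟫ := rfl

/-- First-order integrand. -/
noncomputable def FF1 (d : ℕ) (b c : ℝ) (k : EuclideanSpace ℝ (Fin d) → ℝ)
    (μ w : EuclideanSpace ℝ (Fin d)) : EuclideanSpace ℝ (Fin d) →L[ℝ] ℝ :=
  (c * k w * (2 * b) * rexp (-(b * ‖w - μ‖ ^ 2))) • innerSL ℝ (w - μ)

/-- Second-order integrand. -/
noncomputable def FF2 (d : ℕ) (b c : ℝ) (k : EuclideanSpace ℝ (Fin d) → ℝ)
    (μ w : EuclideanSpace ℝ (Fin d)) :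
    EuclideanSpace ℝ (Fin d) →L[ℝ] EuclideanSpace ℝ (Fin d) →L[ℝ] ℝ :=
  (c * k w * (2 * b) * rexp (-(b * ‖w - μ‖ ^ 2))) •
    ((2 * b) • ((innerSL ℝ (w - μ)).smulRight (innerSL ℝ (w - μ))) - innerB d)

lemma FF2_apply (b c : ℝ) (k : E → ℝ) (μ w u v : E) :
    FF2 d b c k μ w u v =
      c * k w * (2 * b) * rexp (-(b * ‖w - μ‖ ^ 2)) *
        ((2 * b) * (⟪w - μ, u⟫ * ⟪w - μ, v⟫) - ⟪u, v⟫) := by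
  simp only [FF2, ContinuousLinearMap.smul_apply, ContinuousLinearMap.sub_apply,
    ContinuousLinearMap.coe_smul', Pi.smul_apply, ContinuousLinearMap.smulRight_apply,
    innerB_apply, innerSL_apply_apply, smul_eq_mul]

lemma gauss_hasFDerivAt (a b : ℝ) (w μ : E) :
    HasFDerivAt (fun μ : E => a * rexp (-(b * ‖w - μ‖ ^ 2)))
      ((a * (2 * b) * rexp (-(b * ‖w - μ‖ ^ 2))) • innerSL ℝ (w - μ)) μ := by
  have h : HasFDerivAt (fun μ : E => w - μ) (-(ContinuousLinearMap.id ℝ E)) μ := by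
    simpa using (hasFDerivAt_id (𝕜 := ℝ) μ).const_sub w
  have h2 := (((h.norm_sq).const_mul b).neg).exp.const_mul a
  refine HasFDerivAt.congr_fderiv h2 ?_
  ext y
  simp [ContinuousLinearMap.smul_apply, ContinuousLinearMap.comp_apply, two_smul]
  ring

lemma gauss_hasFDerivAt₂ (a b : ℝ) (w μ : E) :
    HasFDerivAt (fun μ : E => (a * rexp (-(b * ‖w - μ‖ ^ 2))) • innerSL ℝ (w - μ))
      ((a * rexp (-(b * ‖w - μ‖ ^ 2))) •
        ((2 * b) • ((innerSL ℝ (w - μ)).smulRight (innerSL ℝ (w - μ))) - innerB d)) μ := by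
  have h : HasFDerivAt (fun μ : E => w - μ) (-(ContinuousLinearMap.id ℝ E)) μ := by
    simpa using (hasFDerivAt_id (𝕜 := ℝ) μ).const_sub w
  have hs : HasFDerivAt (fun μ : E => a * rexp (-(b * ‖w - μ‖ ^ 2)))
      ((a * (2 * b) * rexp (-(b * ‖w - μ‖ ^ 2))) • innerSL ℝ (w - μ)) μ :=
    gauss_hasFDerivAt a b w μ
  have hv : HasFDerivAt (fun μ : E => innerSL ℝ (w - μ))
      ((innerB d).comp (-(ContinuousLinearMap.id ℝ E))) μ :=
    (innerB d).hasFDerivAt.comp μ h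
  have := hs.smul hv
  refine HasFDerivAt.congr_fderiv this ?_
  ext y z
  simp [ContinuousLinearMap.smul_apply, ContinuousLinearMap.comp_apply,
    ContinuousLinearMap.smulRight_apply, ContinuousLinearMap.sub_apply, smul_eq_mul]
  ring

lemma aux_poly_bound {b p : ℝ} (hb : 0 < b) (hp : 0 ≤ p) :
    2 * b * p ^ 2 + p + 1 ≤ (6 + 2 * b⁻¹) * rexp (b / 2 * p ^ 2) := by
  have h1 := Real.add_one_le_exp (b / 2 * p ^ 2)
  have h2 : (0:ℝ) < b⁻¹ := inv_pos.2 hb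
  have h3 : b * b⁻¹ = 1 := mul_inv_cancel₀ hb.ne'
  nlinarith [sq_nonneg (p - 1), sq_nonneg p, mul_nonneg (mul_nonneg hb.le (sq_nonneg p)) hp,
    mul_nonneg h2.le hp, mul_nonneg (mul_nonneg h2.le (sq_nonneg p)) hp]

lemma aux_exp_shift {b p q : ℝ} (hb : 0 < b) (hp : 0 ≤ p) (hq : 0 ≤ q) (hpq : q ≤ p + 1) :
    rexp (-(b / 2 * p ^ 2)) ≤ rexp (b / 2) * rexp (-(b / 4 * q ^ 2)) := by
  rw [← Real.exp_add]
  apply Real.exp_le_exp.2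
  have hq2 : q ^ 2 ≤ (p + 1) ^ 2 := by nlinarith
  nlinarith [mul_le_mul_of_nonneg_left hq2 hb.le, mul_nonneg hb.le (sq_nonneg (p - 1))]

lemma aux_main_bound {b p q : ℝ} (hb : 0 < b) (hp : 0 ≤ p) (hq : 0 ≤ q) (hpq : q ≤ p + 1) :
    (2 * b * p ^ 2 + p + 1) * rexp (-(b * p ^ 2)) ≤
      (6 + 2 * b⁻¹) * rexp (b / 2) * rexp (-(b / 4 * q ^ 2)) := by
  have h0 : rexp (-(b * p ^ 2)) = rexp (-(b / 2 * p ^ 2)) * rexp (-(b / 2 * p ^ 2)) := by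
    rw [← Real.exp_add]; ring_nf
  have h1 : rexp (b / 2 * p ^ 2) * rexp (-(b / 2 * p ^ 2)) = 1 := by
    rw [← Real.exp_add]; simp
  have h2 := aux_poly_bound hb hp
  have h3 := aux_exp_shift hb hp hq hpq
  calc (2 * b * p ^ 2 + p + 1) * rexp (-(b * p ^ 2))
      ≤ ((6 + 2 * b⁻¹) * rexp (b / 2 * p ^ 2)) * rexp (-(b * p ^ 2)) := by
        apply mul_le_mul_of_nonneg_right h2 (Real.exp_pos _).le
    _ = (6 + 2 * b⁻¹) * rexp (-(b / 2 * p ^ 2)) := by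
        rw [h0, ← mul_assoc]
        rw [mul_assoc (6 + 2 * b⁻¹) _ _, h1]
        ring
    _ ≤ (6 + 2 * b⁻¹) * (rexp (b / 2) * rexp (-(b / 4 * q ^ 2))) := by
        have h6 : (0:ℝ) ≤ 6 + 2 * b⁻¹ := by positivity
        exact mul_le_mul_of_nonneg_left h3 h6
    _ = (6 + 2 * b⁻¹) * rexp (b / 2) * rexp (-(b / 4 * q ^ 2)) := by ring

lemma gauss_integrable (d : ℕ) {b : ℝ} (hb : 0 < b) :
    Integrable (fun w : EuclideanSpace ℝ (Fin d) => rexp (-(b * ‖w‖ ^ 2))) := by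
  have h := (GaussianFourier.integrable_cexp_neg_mul_sq_norm_add_of_euclideanSpace (ι := Fin d)
    (b := (b : ℂ)) (by simpa using hb) 0 0).norm
  refine h.congr (Filter.Eventually.of_forall fun w => ?_)
  simp only [Complex.norm_exp]
  norm_num
  left
  norm_cast

end Aux

/-- The Hessian of the Gaussian smoothing admits the log-derivative representation
`∇²g(μ) = ∫ (2π)^(−d/2) exp(−‖w‖²/2) σ⁻²(wwᵀ − I) k(μ + σw) dw`, expressed here via its
bilinear form, using `uᵀ(wwᵀ − I)v = ⟪u,w⟫⟪w,v⟫ − ⟪u,v⟫`. -/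
theorem stmt_10 (d : ℕ) (hd : 1 ≤ d) (σ M : ℝ) (hσ : 0 < σ) (hM : 0 < M)
    (k : EuclideanSpace ℝ (Fin d) → ℝ) (hmeas : Measurable k)
    (hk0 : ∀ w, 0 ≤ k w) (hkM : ∀ w, k w ≤ M)
    (g : EuclideanSpace ℝ (Fin d) → ℝ) (hg : g = gaussSmooth d σ k) :
    ContDiff ℝ 2 g ∧ ∀ (μ u v : EuclideanSpace ℝ (Fin d)),
      iteratedFDeriv ℝ 2 g μ ![u, v] =
        ∫ w : EuclideanSpace ℝ (Fin d),
          (2 * π) ^ (-(d : ℝ) / 2) * Real.exp (-‖w‖ ^ 2 / 2) *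
            ((σ ^ 2)⁻¹ * (⟪u, w⟫ * ⟪w, v⟫ - ⟪u, v⟫)) * k (μ + σ • w) := by
  have hσ2 : (0:ℝ) < σ ^ 2 := by positivity
  set b : ℝ := (2 * σ ^ 2)⁻¹ with hb_def
  have hb : 0 < b := by rw [hb_def]; positivity
  set c : ℝ := (2 * π * σ ^ 2) ^ (-(d : ℝ) / 2) with hc_def
  have hc : 0 < c := by
    rw [hc_def]; exact Real.rpow_pos_of_pos (by positivity) _
  -- rewrite g in exponential-quadratic normal form
  have hgF : g = fun μ => ∫ w, c * k w * rexp (-(b * ‖w - μ‖ ^ 2)) := by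
    rw [hg]; funext μ; unfold gaussSmooth
    rw [← hc_def]
    congr 1; funext w
    rw [show -‖w - μ‖ ^ 2 / (2 * σ ^ 2) = -(b * ‖w - μ‖ ^ 2) by rw [hb_def]; ring]
    ring
  -- measurability
  have hme : ∀ μ : EuclideanSpace ℝ (Fin d),
      Measurable fun w : EuclideanSpace ℝ (Fin d) => rexp (-(b * ‖w - μ‖ ^ 2)) := by
    intro μ
    exact (Real.continuous_exp.measurable).comp
      ((continuous_const.mul ((continuous_id.sub continuous_const).norm.pow 2)).neg.measurable)
  have hmF0 : ∀ μ : EuclideanSpace ℝ (Fin d),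
      AEStronglyMeasurable (fun w => c * k w * rexp (-(b * ‖w - μ‖ ^ 2))) volume := by
    intro μ
    exact (((hmeas.const_mul c).mul (hme μ)).aestronglyMeasurable)
  have hcontinner : ∀ μ : EuclideanSpace ℝ (Fin d),
      Continuous fun w : EuclideanSpace ℝ (Fin d) => innerSL ℝ (w - μ) :=
    fun μ => (innerSL ℝ).continuous.comp (continuous_id.sub continuous_const)
  have hmF1 : ∀ μ : EuclideanSpace ℝ (Fin d),
      AEStronglyMeasurable (FF1 d b c k μ) volume := by
    intro μ
    exact ((((hmeas.const_mul c).mul_const (2 * b)).mul (hme μ)).aestronglyMeasurable).smul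
      (hcontinner μ).aestronglyMeasurable
  have hcontS : ∀ μ : EuclideanSpace ℝ (Fin d),
      Continuous fun w : EuclideanSpace ℝ (Fin d) =>
        (2 * b) • ((innerSL ℝ (w - μ)).smulRight (innerSL ℝ (w - μ))) - innerB d := by
    intro μ
    have h2 : Continuous fun w : EuclideanSpace ℝ (Fin d) =>
        (innerSL ℝ (w - μ)).smulRight (innerSL ℝ (w - μ)) :=
      ((ContinuousLinearMap.smulRightL ℝ (EuclideanSpace ℝ (Fin d))
        (EuclideanSpace ℝ (Fin d) →L[ℝ] ℝ)).isBoundedBilinearMap.continuous).comp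
          ((hcontinner μ).prodMk (hcontinner μ))
    exact (h2.const_smul (2 * b)).sub continuous_const
  have hmF2 : ∀ μ : EuclideanSpace ℝ (Fin d),
      AEStronglyMeasurable (FF2 d b c k μ) volume := by
    intro μ
    exact ((((hmeas.const_mul c).mul_const (2 * b)).mul (hme μ)).aestronglyMeasurable).smul
      (hcontS μ).aestronglyMeasurable
  -- the uniform local bound
  set C : ℝ := c * M * (2 * b) * ((6 + 2 * b⁻¹) * rexp (b / 2)) with hC_def
  have hout : ∀ (w μ μ₀ : EuclideanSpace ℝ (Fin d)), dist μ μ₀ < 1 →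
      c * M * (2 * b) * ((2 * b * ‖w - μ‖ ^ 2 + ‖w - μ‖ + 1) * rexp (-(b * ‖w - μ‖ ^ 2))) ≤
        C * rexp (-(b / 4 * ‖w - μ₀‖ ^ 2)) := by
    intro w μ μ₀ hμ
    have hpq : ‖w - μ₀‖ ≤ ‖w - μ‖ + 1 := by
      have h1 : w - μ₀ = (w - μ) + (μ - μ₀) := by abel
      rw [h1]
      refine (norm_add_le _ _).trans ?_
      have h2 : ‖μ - μ₀‖ < 1 := by rwa [← dist_eq_norm]
      linarith
    have h := aux_main_bound hb (norm_nonneg (w - μ)) (norm_nonneg (w - μ₀)) hpq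
    calc c * M * (2 * b) * ((2 * b * ‖w - μ‖ ^ 2 + ‖w - μ‖ + 1) * rexp (-(b * ‖w - μ‖ ^ 2)))
        ≤ c * M * (2 * b) * ((6 + 2 * b⁻¹) * rexp (b / 2) * rexp (-(b / 4 * ‖w - μ₀‖ ^ 2))) := by
          apply mul_le_mul_of_nonneg_left h (by positivity)
      _ = C * rexp (-(b / 4 * ‖w - μ₀‖ ^ 2)) := by rw [hC_def]; ring
  have hn1 : ∀ (μ₀ w μ : EuclideanSpace ℝ (Fin d)), dist μ μ₀ < 1 →
      ‖FF1 d b c k μ w‖ ≤ C * rexp (-(b / 4 * ‖w - μ₀‖ ^ 2)) := by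
    intro μ₀ w μ hμ
    have h0 : 0 ≤ c * k w * (2 * b) * rexp (-(b * ‖w - μ‖ ^ 2)) :=
      mul_nonneg (mul_nonneg (mul_nonneg hc.le (hk0 w)) (by positivity)) (Real.exp_pos _).le
    have he : ‖FF1 d b c k μ w‖
        = c * k w * (2 * b) * rexp (-(b * ‖w - μ‖ ^ 2)) * ‖w - μ‖ := by
      rw [FF1]
      have hns := norm_smul (c * k w * (2 * b) * rexp (-(b * ‖w - μ‖ ^ 2)))
        (innerSL ℝ (w - μ))
      rw [hns, innerSL_apply_norm, Real.norm_eq_abs, abs_of_nonneg h0]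
    rw [he]
    refine le_trans ?_ (hout w μ μ₀ hμ)
    have hkw := hkM w
    have hkw0 := hk0 w
    have hp : (0:ℝ) ≤ ‖w - μ‖ := norm_nonneg _
    have hexp := (Real.exp_pos (-(b * ‖w - μ‖ ^ 2))).le
    nlinarith [mul_nonneg (mul_nonneg hc.le hM.le) hb.le,
      mul_nonneg (mul_nonneg hc.le hkw0) hb.le,
      mul_nonneg (mul_nonneg (mul_nonneg hc.le hM.le) hb.le) hexp,
      mul_nonneg (mul_nonneg (mul_nonneg hc.le (sub_nonneg.2 hkw)) hb.le) (mul_nonneg hexp hp),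
      mul_nonneg (mul_nonneg (mul_nonneg hc.le hM.le) hb.le)
        (mul_nonneg hexp (mul_nonneg hb.le (sq_nonneg ‖w - μ‖)))]
  have hn2 : ∀ (μ₀ w μ : EuclideanSpace ℝ (Fin d)), dist μ μ₀ < 1 →
      ‖FF2 d b c k μ w‖ ≤ C * rexp (-(b / 4 * ‖w - μ₀‖ ^ 2)) := by
    intro μ₀ w μ hμ
    have h0 : 0 ≤ c * k w * (2 * b) * rexp (-(b * ‖w - μ‖ ^ 2)) :=
      mul_nonneg (mul_nonneg (mul_nonneg hc.le (hk0 w)) (by positivity)) (Real.exp_pos _).le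
    have hvec : ‖(2 * b) • ((innerSL ℝ (w - μ)).smulRight (innerSL ℝ (w - μ))) - innerB d‖
        ≤ 2 * b * ‖w - μ‖ ^ 2 + 1 := by
      refine (norm_sub_le ((2 * b) • ((innerSL ℝ (w - μ)).smulRight (innerSL ℝ (w - μ))))
        (innerB d)).trans ?_
      have h1 : ‖(2 * b) • ((innerSL ℝ (w - μ)).smulRight (innerSL ℝ (w - μ)))‖
          ≤ (2 * b) * (‖w - μ‖ * ‖w - μ‖) := by
        refine (ContinuousLinearMap.opNorm_smul_le (2 * b)
          ((innerSL ℝ (w - μ)).smulRight (innerSL ℝ (w - μ)))).trans_eq ?_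
        rw [ContinuousLinearMap.norm_smulRight_apply, innerSL_apply_norm,
          Real.norm_eq_abs, abs_of_nonneg (by positivity : (0:ℝ) ≤ 2 * b)]
      have h2 : ‖innerB d‖ ≤ 1 := by
        refine ContinuousLinearMap.opNorm_le_bound _ zero_le_one fun u => ?_
        rw [one_mul]
        have : innerB d u = innerSL ℝ u := rfl
        rw [this, innerSL_apply_norm]
      have h3 : ‖w - μ‖ * ‖w - μ‖ = ‖w - μ‖ ^ 2 := (sq ‖w - μ‖).symm
      rw [h3] at h1
      linarith
    have he : ‖FF2 d b c k μ w‖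
        ≤ c * k w * (2 * b) * rexp (-(b * ‖w - μ‖ ^ 2)) * (2 * b * ‖w - μ‖ ^ 2 + 1) := by
      rw [FF2]
      refine (ContinuousLinearMap.opNorm_smul_le _ _).trans ?_
      rw [Real.norm_eq_abs, abs_of_nonneg h0]
      exact mul_le_mul_of_nonneg_left hvec h0
    refine he.trans (le_trans ?_ (hout w μ μ₀ hμ))
    have hkw := hkM w
    have hkw0 := hk0 w
    have hp : (0:ℝ) ≤ ‖w - μ‖ := norm_nonneg _
    have hexp := (Real.exp_pos (-(b * ‖w - μ‖ ^ 2))).le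
    nlinarith [mul_nonneg (mul_nonneg (mul_nonneg hc.le hM.le) hb.le) hexp,
      mul_nonneg (mul_nonneg (mul_nonneg hc.le (sub_nonneg.2 hkw)) hb.le)
        (mul_nonneg hexp (add_nonneg (mul_nonneg (by positivity : (0:ℝ) ≤ 2*b) (sq_nonneg ‖w - μ‖)) zero_le_one)),
      mul_nonneg (mul_nonneg (mul_nonneg hc.le hM.le) hb.le) (mul_nonneg hexp hp)]
  -- integrable dominating function
  have hbound_int : ∀ μ₀ : EuclideanSpace ℝ (Fin d),
      Integrable (fun w : EuclideanSpace ℝ (Fin d) => C * rexp (-(b / 4 * ‖w - μ₀‖ ^ 2))) := by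
    intro μ₀
    exact ((gauss_integrable d (by positivity : (0:ℝ) < b / 4)).comp_sub_right μ₀).const_mul C
  have hintF0 : ∀ μ₀ : EuclideanSpace ℝ (Fin d),
      Integrable (fun w => c * k w * rexp (-(b * ‖w - μ₀‖ ^ 2))) := by
    intro μ₀
    refine Integrable.mono' (((gauss_integrable d hb).comp_sub_right μ₀).const_mul (c * M))
      (hmF0 μ₀) (Filter.Eventually.of_forall fun w => ?_)
    have h0 : 0 ≤ c * k w * rexp (-(b * ‖w - μ₀‖ ^ 2)) :=
      mul_nonneg (mul_nonneg hc.le (hk0 w)) (Real.exp_pos _).le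
    rw [Real.norm_eq_abs, abs_of_nonneg h0]
    have := hkM w
    have hexp := (Real.exp_pos (-(b * ‖w - μ₀‖ ^ 2))).le
    nlinarith [mul_nonneg hc.le hexp]
  have hintF1 : ∀ μ₀ : EuclideanSpace ℝ (Fin d), Integrable (FF1 d b c k μ₀) := by
    intro μ₀
    exact Integrable.mono' (hbound_int μ₀) (hmF1 μ₀)
      (Filter.Eventually.of_forall fun w => hn1 μ₀ w μ₀ (by simp))
  have hintF2 : ∀ μ₀ : EuclideanSpace ℝ (Fin d),
      @Integrable _ _ SeminormedAddGroup.toContinuousENorm _ _ (FF2 d b c k μ₀) volume := by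
    intro μ₀
    refine Integrable.mono' (f := FF2 d b c k μ₀) (hbound_int μ₀) ?_ ?_
    · exact hmF2 μ₀
    · exact Filter.Eventually.of_forall fun w => hn2 μ₀ w μ₀ (by simp)
  -- derivatives under the integral sign
  have hder1 : ∀ μ₀ : EuclideanSpace ℝ (Fin d),
      HasFDerivAt (fun μ => ∫ w, c * k w * rexp (-(b * ‖w - μ‖ ^ 2)))
        (∫ w, FF1 d b c k μ₀ w) μ₀ := by
    intro μ₀
    apply hasFDerivAt_integral_of_dominated_of_fderiv_le
      (F := fun μ w => c * k w * rexp (-(b * ‖w - μ‖ ^ 2)))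
      (F' := fun μ w => FF1 d b c k μ w)
      (bound := fun w => C * rexp (-(b / 4 * ‖w - μ₀‖ ^ 2))) (Metric.ball_mem_nhds μ₀ one_pos)
      (Filter.Eventually.of_forall fun μ => hmF0 μ) (hintF0 μ₀) (hmF1 μ₀)
      (Filter.Eventually.of_forall fun w μ hμ => hn1 μ₀ w μ (by simpa [Metric.mem_ball] using hμ))
      (hbound_int μ₀)
      (Filter.Eventually.of_forall fun w μ hμ => gauss_hasFDerivAt (c * k w) b w μ)
  have hder2 : ∀ μ₀ : EuclideanSpace ℝ (Fin d),
      HasFDerivAt (fun μ => ∫ w, FF1 d b c k μ w) (∫ w, FF2 d b c k μ₀ w) μ₀ := by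
    intro μ₀
    apply hasFDerivAt_integral_of_dominated_of_fderiv_le
      (F := fun μ w => FF1 d b c k μ w)
      (F' := fun μ w => FF2 d b c k μ w)
      (bound := fun w => C * rexp (-(b / 4 * ‖w - μ₀‖ ^ 2))) (Metric.ball_mem_nhds μ₀ one_pos)
      (Filter.Eventually.of_forall fun μ => hmF1 μ) (hintF1 μ₀) (hmF2 μ₀)
      (Filter.Eventually.of_forall fun w μ hμ => hn2 μ₀ w μ (by simpa [Metric.mem_ball] using hμ))
      (hbound_int μ₀)
      (Filter.Eventually.of_forall fun w μ hμ => gauss_hasFDerivAt₂ (c * k w * (2 * b)) b w μ)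
  have hdiffg : Differentiable ℝ g := by
    rw [hgF]; exact fun μ => (hder1 μ).differentiableAt
  have hfd1 : fderiv ℝ g = fun μ => ∫ w, FF1 d b c k μ w := by
    rw [hgF]; funext μ; exact (hder1 μ).fderiv
  have hdiff2 : Differentiable ℝ (fderiv ℝ g) := by
    rw [hfd1]; exact fun μ => (hder2 μ).differentiableAt
  have hfd2 : fderiv ℝ (fderiv ℝ g) = fun μ => ∫ w, FF2 d b c k μ w := by
    rw [hfd1]; funext μ; exact (hder2 μ).fderiv
  have hcont2 : Continuous fun μ => ∫ w, FF2 d b c k μ w := by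
    refine continuous_iff_continuousAt.2 fun μ₀ => ?_
    refine continuousAt_of_dominated (Filter.Eventually.of_forall fun μ => hmF2 μ) ?_
      (hbound_int μ₀) ?_
    · filter_upwards [Metric.ball_mem_nhds μ₀ one_pos] with μ hμ
      exact Filter.Eventually.of_forall fun w =>
        hn2 μ₀ w μ (by simpa [Metric.mem_ball] using hμ)
    · refine Filter.Eventually.of_forall fun w => Continuous.continuousAt ?_
      have hsc : Continuous fun μ : EuclideanSpace ℝ (Fin d) =>
          c * k w * (2 * b) * rexp (-(b * ‖w - μ‖ ^ 2)) :=
        continuous_const.mul (Real.continuous_exp.comp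
          (continuous_const.mul ((continuous_const.sub continuous_id).norm.pow 2)).neg)
      have hci : Continuous fun μ : EuclideanSpace ℝ (Fin d) => innerSL ℝ (w - μ) :=
        (innerSL ℝ).continuous.comp (continuous_const.sub continuous_id)
      have hS : Continuous fun μ : EuclideanSpace ℝ (Fin d) =>
          (innerSL ℝ (w - μ)).smulRight (innerSL ℝ (w - μ)) :=
        ((ContinuousLinearMap.smulRightL ℝ (EuclideanSpace ℝ (Fin d))
          (EuclideanSpace ℝ (Fin d) →L[ℝ] ℝ)).isBoundedBilinearMap.continuous).comp
            (hci.prodMk hci)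
      exact hsc.smul ((hS.const_smul (2 * b)).sub continuous_const)
  refine ⟨?_, ?_⟩
  · -- ContDiff ℝ 2 g
    rw [show (2 : WithTop ℕ∞) = 1 + 1 by norm_num]
    refine contDiff_succ_iff_fderiv.2 ⟨hdiffg, ?_, ?_⟩
    · intro h; simp at h
    · refine contDiff_one_iff_fderiv.2 ⟨hdiff2, ?_⟩
      rw [hfd2]; exact hcont2
  · intro μ u v
    rw [iteratedFDeriv_two_apply, hfd2]
    simp only [Matrix.cons_val_zero, Matrix.cons_val_one, Matrix.head_cons]
    have hIu : Integrable (fun w => FF2 d b c k μ w u) volume :=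
      (hintF2 μ).apply_continuousLinearMap u
    rw [ContinuousLinearMap.integral_apply (hintF2 μ) u]
    rw [ContinuousLinearMap.integral_apply hIu v]
    -- the constant identity
    have hσd : (0:ℝ) < σ ^ d := by positivity
    have hconst : (σ:ℝ) ^ d * c = (2 * π) ^ (-(d : ℝ) / 2) := by
      rw [hc_def, Real.mul_rpow (by positivity) (by positivity)]
      have hs2 : ((σ:ℝ) ^ 2) ^ (-(d:ℝ)/2) = (σ ^ d)⁻¹ := by
        rw [← Real.rpow_natCast σ 2, ← Real.rpow_mul hσ.le]
        rw [show ((2:ℕ):ℝ) * (-(d:ℝ)/2) = -(d:ℝ) by push_cast; ring]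
        rw [Real.rpow_neg hσ.le, Real.rpow_natCast]
      rw [hs2]
      field_simp
    -- pointwise change-of-variables identity
    have hkey : ∀ x : EuclideanSpace ℝ (Fin d),
        (2 * π) ^ (-(d : ℝ) / 2) * rexp (-‖x‖ ^ 2 / 2) *
            ((σ ^ 2)⁻¹ * (⟪u, x⟫ * ⟪x, v⟫ - ⟪u, v⟫)) * k (μ + σ • x)
          = σ ^ d * (FF2 d b c k μ (μ + σ • x) u v) := by
      intro x
      rw [FF2_apply]
      rw [show μ + σ • x - μ = σ • x from add_sub_cancel_left μ (σ • x)]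
      rw [show ((⟪σ • x, u⟫:ℝ)) = σ * ⟪x, u⟫ from real_inner_smul_left x u σ]
      rw [show ((⟪σ • x, v⟫:ℝ)) = σ * ⟪x, v⟫ from real_inner_smul_left x v σ]
      rw [show ‖σ • x‖ ^ 2 = σ ^ 2 * ‖x‖ ^ 2 by
        rw [norm_smul, Real.norm_eq_abs, mul_pow, sq_abs]]
      rw [show -(b * (σ ^ 2 * ‖x‖ ^ 2)) = -‖x‖ ^ 2 / 2 by
        rw [hb_def]; field_simp]
      rw [← hconst, hb_def]
      rw [show ((⟪u, x⟫:ℝ)) = ⟪x, u⟫ from real_inner_comm x u]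
      field_simp
    -- change of variables
    have e2 : ∫ x : EuclideanSpace ℝ (Fin d), FF2 d b c k μ (μ + σ • x) u v
        = |((σ ^ (Module.finrank ℝ (EuclideanSpace ℝ (Fin d)))):ℝ)⁻¹| •
            ∫ x : EuclideanSpace ℝ (Fin d), FF2 d b c k μ (μ + x) u v :=
      MeasureTheory.Measure.integral_comp_smul volume
        (fun y => FF2 d b c k μ (μ + y) u v) σ
    have e3 : ∫ x : EuclideanSpace ℝ (Fin d), FF2 d b c k μ (μ + x) u v
        = ∫ w, FF2 d b c k μ w u v :=
      MeasureTheory.integral_add_left_eq_self (fun w => FF2 d b c k μ w u v) μ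
    have e4 : |((σ ^ (Module.finrank ℝ (EuclideanSpace ℝ (Fin d)))):ℝ)⁻¹| = (σ ^ d)⁻¹ := by
      rw [finrank_euclideanSpace_fin]
      exact abs_of_nonneg (by positivity)
    calc ∫ w, FF2 d b c k μ w u v
        = σ ^ d * ((σ ^ d)⁻¹ * ∫ w, FF2 d b c k μ w u v) := by
          field_simp
      _ = σ ^ d * ∫ x : EuclideanSpace ℝ (Fin d), FF2 d b c k μ (μ + σ • x) u v := by
          rw [e2, e3, e4, smul_eq_mul]
      _ = ∫ x : EuclideanSpace ℝ (Fin d), σ ^ d * (FF2 d b c k μ (μ + σ • x) u v) := by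
          rw [integral_const_mul]
      _ = ∫ w : EuclideanSpace ℝ (Fin d),
            (2 * π) ^ (-(d : ℝ) / 2) * rexp (-‖w‖ ^ 2 / 2) *
              ((σ ^ 2)⁻¹ * (⟪u, w⟫ * ⟪w, v⟫ - ⟪u, v⟫)) * k (μ + σ • w) := by
          congr 1
          funext x
          rw [hkey x]
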